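/- Let Y be a closed subspace of a real Banach space X. Suppose Y has property-(U) in X and there is a projection P : X* → X* with range Y⊥, kernel G, and ‖P‖ = 1 = ‖I − P‖. Then Y has property-(HB): for every x* ∈ X* with decomposition x* = y# + y⊥ where y# ∈ G and 0 ≠ y⊥ ∈ Y⊥, one has ‖x*‖ > ‖y#‖ and ‖x*‖ ≥ ‖y⊥‖. -/

import Mathlib

open NormedSpace Metric Set

namespace Paper

variable {X : Type*} [NormedAddCommGroup X] [NormedSpace ℝ X]

/-- The restriction of a continuous linear functional to a subspace. -/
noncomputable def restr (Y : Submodule ℝ X) (f : StrongDual ℝ X) : StrongDual ℝ ↥Y :=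
  f.comp Y.subtypeL

/-- The annihilator `Y⊥` of a subspace `Y` in the dual. -/
def ann (Y : Submodule ℝ X) : Set (StrongDual ℝ X) := {f | ∀ y ∈ Y, f y = 0}

/-- The set of norm-preserving (Hahn–Banach) extensions of `g : Y* ` to `X`. -/
def HB (Y : Submodule ℝ X) (g : StrongDual ℝ ↥Y) : Set (StrongDual ℝ X) :=
  {f | (∀ y : Y, f (y : X) = g y) ∧ ‖f‖ = ‖g‖}

/-- Best approximations to `x` from a set `A`. -/
def bestApprox {E : Type*} [NormedAddCommGroup E] (A : Set E) (x : E) : Set E :=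
  {z ∈ A | ‖x - z‖ = infDist x A}

/-- Property-(U): every functional on `Y` has a unique norm-preserving extension to `X`. -/
def propU (Y : Submodule ℝ X) : Prop :=
  ∀ g : StrongDual ℝ ↥Y, ∃! f : StrongDual ℝ X, f ∈ HB Y g

/-- `Y# `: the set of functionals whose norm equals the norm of their restriction to `Y`. -/
def sharp (Y : Submodule ℝ X) : Set (StrongDual ℝ X) := {f | ‖f‖ = ‖restr Y f‖}

/-- Property-(HB), stated via the decomposition `X* = Y# ⊕ Y⊥`. -/
def propHB (Y : Submodule ℝ X) : Prop :=
  (∀ f ∈ sharp Y, ∀ g ∈ sharp Y, f + g ∈ sharp Y) ∧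
  (∀ (c : ℝ), ∀ f ∈ sharp Y, c • f ∈ sharp Y) ∧
  (∀ f : StrongDual ℝ X, ∃ g ∈ sharp Y, ∃ h ∈ ann Y, f = g + h) ∧
  (∀ g ∈ sharp Y, ∀ h ∈ ann Y, h ≠ 0 → ‖g‖ < ‖g + h‖ ∧ ‖h‖ ≤ ‖g + h‖)

end Paper

open Paper

/-- if `Y` has property-(U) in `X` and there is a bi-contractive projection
`P : X* → X*` with range `Y⊥` and kernel `G`, then `Y` has property-(HB): for any
decomposition `x* = y# + y⊥` with `y# ∈ G` and `0 ≠ y⊥ ∈ Y⊥`, one has `‖x*‖ > ‖y#‖` and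
`‖x*‖ ≥ ‖y⊥‖`. -/
theorem stmt6 {X : Type*} [NormedAddCommGroup X] [NormedSpace ℝ X] [CompleteSpace X]
    (Y : Submodule ℝ X) (hYc : IsClosed (Y : Set X)) (hU : propU Y)
    (P : StrongDual ℝ X →L[ℝ] StrongDual ℝ X)
    (hproj : ∀ f : StrongDual ℝ X, P (P f) = P f)
    (hran : ∀ f : StrongDual ℝ X, P f ∈ ann Y)
    (hfix : ∀ h ∈ ann Y, P h = h)
    (hP1 : ‖P‖ = 1)
    (hP2 : ‖ContinuousLinearMap.id ℝ (StrongDual ℝ X) - P‖ = 1) :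
    ∀ f g h : StrongDual ℝ X, P g = 0 → h ∈ ann Y → h ≠ 0 → f = g + h →
      ‖g‖ < ‖f‖ ∧ ‖h‖ ≤ ‖f‖ := by
  intro f g h hPg hh hh0 hf
  have hPh : P h = h := hfix h hh
  have hPf : P f = h := by rw [hf, map_add, hPg, hPh, zero_add]
  have hhle : ‖h‖ ≤ ‖f‖ := by
    calc ‖h‖ = ‖P f‖ := by rw [hPf]
    _ ≤ ‖P‖ * ‖f‖ := P.le_opNorm f
    _ = ‖f‖ := by rw [hP1, one_mul]
  -- every element of ker P has norm equal to its restriction's norm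
  have key : ∀ u : StrongDual ℝ X, P u = 0 → ‖u‖ = ‖restr Y u‖ := by
    intro u hu
    have hle : ‖restr Y u‖ ≤ ‖u‖ := by
      apply ContinuousLinearMap.opNorm_le_bound _ (norm_nonneg u)
      intro y
      simpa [restr] using u.le_opNorm (y : X)
    obtain ⟨e, he, hen⟩ := exists_extension_norm_eq Y (restr Y u)
    have hann : u - e ∈ ann Y := by
      intro y hy
      have h1 := he ⟨y, hy⟩
      simp only [restr, ContinuousLinearMap.coe_comp', Function.comp_apply,
        Submodule.coe_subtypeL', Submodule.coe_subtype] at h1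
      simp [h1]
    have hPe : P e = e - u := by
      have h1 : P (u - e) = u - e := hfix _ hann
      have h2 : P u - P e = u - e := by rw [← map_sub]; exact h1
      rw [hu, zero_sub] at h2
      simpa [neg_sub] using neg_eq_iff_eq_neg.mp h2
    have hue : u = (ContinuousLinearMap.id ℝ (StrongDual ℝ X) - P) e := by
      simp [ContinuousLinearMap.sub_apply, hPe]
    have : ‖u‖ ≤ ‖restr Y u‖ := by
      calc ‖u‖ = ‖(ContinuousLinearMap.id ℝ (StrongDual ℝ X) - P) e‖ := by rw [← hue]
      _ ≤ ‖ContinuousLinearMap.id ℝ (StrongDual ℝ X) - P‖ * ‖e‖ :=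
          (ContinuousLinearMap.id ℝ (StrongDual ℝ X) - P).le_opNorm e
      _ = ‖restr Y u‖ := by rw [hP2, one_mul, hen]
    linarith
  have hg : ‖g‖ = ‖restr Y g‖ := key g hPg
  have hgle : ‖g‖ ≤ ‖f‖ := by
    have hgf : g = (ContinuousLinearMap.id ℝ (StrongDual ℝ X) - P) f := by
      rw [ContinuousLinearMap.sub_apply, ContinuousLinearMap.id_apply, hPf, hf]
      abel
    calc ‖g‖ = ‖(ContinuousLinearMap.id ℝ (StrongDual ℝ X) - P) f‖ := by rw [← hgf]
    _ ≤ ‖ContinuousLinearMap.id ℝ (StrongDual ℝ X) - P‖ * ‖f‖ :=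
        (ContinuousLinearMap.id ℝ (StrongDual ℝ X) - P).le_opNorm f
    _ = ‖f‖ := by rw [hP2, one_mul]
  refine ⟨lt_of_le_of_ne hgle ?_, hhle⟩
  intro heq
  apply hh0
  obtain ⟨e, _, huniq⟩ := hU (restr Y g)
  have hgHB : g ∈ HB Y (restr Y g) := ⟨fun y => rfl, hg⟩
  have hfHB : f ∈ HB Y (restr Y g) := by
    constructor
    · intro y
      have hy0 : h (y : X) = 0 := hh y y.2
      simp [hf, hy0, restr]
    · rw [← heq, hg]
  have : f = g := (huniq f hfHB).trans (huniq g hgHB).symm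
  have : h = f - g := by rw [hf]; abel
  rw [this, ‹f = g›, sub_self]
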